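/- Let G be a finite simple graph on vertex set V, let k ≥ |V|, let I be the (finite) set of all partitions of V into independent sets of G, and for each P ∈ I fix a proper k-coloring c_P of G with kernel partition P. Define the matrix L ∈ ℕ^{I×I} by L(P,Q) = number of proper k-colorings of G □ P₂ whose layer-1 coloring equals c_P and whose layer-2 kernel partition equals Q. Then for every integer n ≥ 1 and all P, Q ∈ I, the (P,Q)-entry of the matrix power Lⁿ equals the number of proper k-colorings of G □ P_{n+1} whose layer-1 coloring equals c_P and whose layer-(n+1) kernel partition equals Q. -/

import Mathlib

open SimpleGraph

/-- The set of partitions (as setoids) of the vertex set of `G` all of whose blocks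
are independent sets of `G`. -/
def IndepPartition {V : Type*} (G : SimpleGraph V) : Type _ :=
  {s : Setoid V // ∀ u v, s.r u v → ¬ G.Adj u v}

instance {V : Type*} [Finite V] (G : SimpleGraph V) : Finite (IndepPartition G) := by
  have : Finite (Setoid V) :=
    Finite.of_injective (fun s : Setoid V => s.r)
      (fun a b h => Setoid.ext fun x y => by rw [show a.r = b.r from h])
  exact Subtype.finite

noncomputable instance {V : Type*} [Finite V] (G : SimpleGraph V) :
    Fintype (IndepPartition G) := Fintype.ofFinite _

noncomputable instance {V : Type*} (G : SimpleGraph V) :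
    DecidableEq (IndepPartition G) := Classical.decEq _

/-! ### Auxiliary machinery -/

/-- There is a permutation of colors transforming `d` into `d'` whenever they have
equal kernels. -/
lemma exists_perm_of_ker_eq {α : Type*} {k : ℕ} (d d' : α → Fin k)
    (h : ∀ u v, d u = d v ↔ d' u = d' v) :
    ∃ σ : Equiv.Perm (Fin k), ∀ v, σ (d v) = d' v := by
  classical
  have hpick : ∀ x : Set.range d, d x.2.choose = (x : Fin k) := fun x => x.2.choose_spec
  have hpick' : ∀ x : Set.range d', d' x.2.choose = (x : Fin k) := fun x => x.2.choose_spec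
  let e₀ : Set.range d ≃ Set.range d' :=
  { toFun := fun x => ⟨d' x.2.choose, Set.mem_range_self _⟩
    invFun := fun y => ⟨d y.2.choose, Set.mem_range_self _⟩
    left_inv := fun x => Subtype.ext (((h _ _).2 (hpick' _)).trans (hpick x))
    right_inv := fun y => Subtype.ext (((h _ _).1 (hpick _)).trans (hpick' y)) }
  have hcard : Fintype.card ((Set.range d)ᶜ : Set (Fin k))
      = Fintype.card ((Set.range d')ᶜ : Set (Fin k)) := by
    rw [Fintype.card_compl_set, Fintype.card_compl_set, Fintype.card_congr e₀]
  obtain ⟨σ, hσ⟩ := (Equiv.Set.compl e₀).symm (Fintype.equivOfCardEq hcard)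
  refine ⟨σ, fun v => ?_⟩
  have h1 := hσ ⟨d v, Set.mem_range_self v⟩
  rw [h1]
  exact (h _ _).1 (hpick ⟨d v, Set.mem_range_self v⟩)

/-- The set of ways to color one further layer, on top of a layer colored by `d`,
with kernel partition `Q`. -/
abbrev ExtSet {V : Type*} (G : SimpleGraph V) {k : ℕ} (d : V → Fin k)
    (Q : IndepPartition G) : Type _ :=
  {e : V → Fin k // (∀ v, e v ≠ d v) ∧ Setoid.ker e = Q.1}

lemma extSet_card_congr {V : Type*} (G : SimpleGraph V) {k : ℕ} {d d' : V → Fin k}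
    (h : Setoid.ker d = Setoid.ker d') (Q : IndepPartition G) :
    Nat.card (ExtSet G d Q) = Nat.card (ExtSet G d' Q) := by
  have hiff : ∀ u v, d u = d v ↔ d' u = d' v := fun u v => by
    rw [← Setoid.ker_def, ← Setoid.ker_def, h]
  obtain ⟨σ, hσ⟩ := exists_perm_of_ker_eq d d' hiff
  apply Nat.card_congr
  refine Equiv.subtypeEquiv (Equiv.arrowCongr (Equiv.refl V) σ) fun e => ?_
  have happ : ∀ v, (Equiv.arrowCongr (Equiv.refl V) σ) e v = σ (e v) := fun v => rfl
  constructor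
  · rintro ⟨h1, h2⟩
    constructor
    · intro v hv
      rw [happ, ← hσ v] at hv
      exact h1 v (σ.injective hv)
    · rw [← h2]
      exact Setoid.ext fun x y => by
        simp only [Setoid.ker_def, happ, EmbeddingLike.apply_eq_iff_eq]
  · rintro ⟨h1, h2⟩
    constructor
    · intro v hv
      exact h1 v (by rw [happ, hv, hσ])
    · rw [← h2]
      exact Setoid.ext fun x y => by
        simp only [Setoid.ker_def, happ, EmbeddingLike.apply_eq_iff_eq]

/-- The set of colorings of `G □ P_{m+1}` with prescribed first layer coloring and
last layer kernel partition. -/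
abbrev CSet {V : Type*} (G : SimpleGraph V) {k : ℕ} (cP : IndepPartition G → V → Fin k)
    (m : ℕ) (P Q : IndepPartition G) : Type _ :=
  {c : V × Fin (m + 1) → Fin k //
    (∀ a b, (G.boxProd (pathGraph (m + 1))).Adj a b → c a ≠ c b) ∧
    (∀ v, c (v, 0) = cP P v) ∧
    Setoid.ker (fun v => c (v, Fin.last m)) = Q.1}

lemma nat_card_sigma' {ι : Type*} [Fintype ι] (g : ι → Type*) [∀ i, Finite (g i)] :
    Nat.card (Σ i, g i) = ∑ i, Nat.card (g i) := by
  classical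
  letI : ∀ i, Fintype (g i) := fun i => Fintype.ofFinite _
  simp [Nat.card_eq_fintype_card]

lemma card_eq_sum_fibers {α β : Type*} [Finite α] [Fintype β] (f : α → β) :
    Nat.card α = ∑ b, Nat.card {a // f a = b} := by
  rw [← Nat.card_congr (Equiv.sigmaFiberEquiv f), nat_card_sigma']

lemma card_eq_card_mul {α β : Type*} [Finite α] [Finite β] (f : α → β) (N : ℕ)
    (h : ∀ b, Nat.card {a // f a = b} = N) : Nat.card α = Nat.card β * N := by
  classical
  letI := Fintype.ofFinite β
  rw [card_eq_sum_fibers f]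
  simp [h, Nat.card_eq_fintype_card, Finset.sum_const, mul_comm]

lemma proper_of_ker {V : Type*} {k : ℕ} {G : SimpleGraph V} {e : V → Fin k}
    {Q : IndepPartition G} (hQ : Setoid.ker e = Q.1) :
    ∀ u v, G.Adj u v → e u ≠ e v := by
  intro u v hadj hev
  have hker : Setoid.ker e u v := Setoid.ker_def.mpr hev
  have : Q.1 u v := hQ ▸ hker
  exact Q.2 u v this hadj

lemma card_two_layer {V : Type*} (G : SimpleGraph V) {k : ℕ} (d : V → Fin k)
    (hd : ∀ u v, G.Adj u v → d u ≠ d v) (Q : IndepPartition G) :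
    Nat.card {c : V × Fin 2 → Fin k //
      (∀ a b, (G.boxProd (pathGraph 2)).Adj a b → c a ≠ c b) ∧
      (∀ v, c (v, 0) = d v) ∧
      Setoid.ker (fun v => c (v, 1)) = Q.1} = Nat.card (ExtSet G d Q) := by
  apply Nat.card_congr
  refine
    { toFun := fun c => ⟨fun v => c.1 (v, 1), fun v => ?_, c.2.2.2⟩
      invFun := fun e => ⟨fun p => if p.2 = 0 then d p.1 else e.1 p.1, ?_, ?_, ?_⟩
      left_inv := ?_
      right_inv := ?_ }
  · -- c (v,1) ≠ d v
    have hadj : (G.boxProd (pathGraph 2)).Adj (v, 1) (v, 0) := by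
      rw [boxProd_adj]
      exact Or.inr ⟨pathGraph_adj.mpr (Or.inr rfl), rfl⟩
    have := c.2.1 _ _ hadj
    rwa [c.2.2.1 v] at this
  · -- properness of glued
    rintro ⟨u, i⟩ ⟨v, j⟩ hadj
    rcases boxProd_adj.mp hadj with ⟨hG, hij⟩ | ⟨hpath, huv⟩
    · simp only at hij; subst hij
      by_cases hi : i = 0
      · subst hi; simpa using hd u v hG
      · simp only [if_neg hi]
        exact proper_of_ker e.2.2 u v hG
    · simp only at huv; subst huv
      have hne : i ≠ j := by
        rcases pathGraph_adj.mp hpath with h | h <;> (intro hh; subst hh; omega)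
      fin_cases i <;> fin_cases j <;> simp_all
      · exact fun h => (e.2.1 u) h.symm
      · exact e.2.1 u
  · intro v; simp
  · -- kernel of layer 1
    have : (fun v => if (1 : Fin 2) = 0 then d v else e.1 v) = e.1 := by
      funext v; simp
    rw [this]
    exact e.2.2
  · rintro ⟨c, hc⟩
    apply Subtype.ext
    funext ⟨v, i⟩
    fin_cases i
    · simpa using (hc.2.1 v).symm
    · simp
  · rintro ⟨e, he⟩
    apply Subtype.ext
    funext v
    simp

/-! ### Restriction and gluing -/

def resFun {V : Type*} {k m : ℕ} (c : V × Fin (m + 1 + 1) → Fin k) :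
    V × Fin (m + 1) → Fin k :=
  fun p => c (p.1, p.2.castSucc)

lemma resFun_proper {V : Type*} (G : SimpleGraph V) {k m : ℕ}
    {c : V × Fin (m + 1 + 1) → Fin k}
    (h : ∀ a b, (G.boxProd (pathGraph (m + 1 + 1))).Adj a b → c a ≠ c b) :
    ∀ a b, (G.boxProd (pathGraph (m + 1))).Adj a b → resFun c a ≠ resFun c b := by
  rintro ⟨u, i⟩ ⟨v, j⟩ hadj
  apply h
  rcases boxProd_adj.mp hadj with ⟨hG, hij⟩ | ⟨hpath, huv⟩
  · simp only at hij; subst hij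
    exact boxProd_adj.mpr (Or.inl ⟨hG, rfl⟩)
  · simp only at huv; subst huv
    refine boxProd_adj.mpr (Or.inr ⟨?_, rfl⟩)
    rcases pathGraph_adj.mp hpath with hh | hh
    · exact pathGraph_adj.mpr (Or.inl (by simpa using hh))
    · exact pathGraph_adj.mpr (Or.inr (by simpa using hh))

def glueFun {V : Type*} {k m : ℕ} (c₁ : V × Fin (m + 1) → Fin k) (e : V → Fin k) :
    V × Fin (m + 1 + 1) → Fin k :=
  fun p => Fin.lastCases (e p.1) (fun j => c₁ (p.1, j)) p.2

@[simp] lemma glueFun_castSucc {V : Type*} {k m : ℕ} (c₁ : V × Fin (m + 1) → Fin k)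
    (e : V → Fin k) (v : V) (i : Fin (m + 1)) :
    glueFun c₁ e (v, i.castSucc) = c₁ (v, i) := by
  simp [glueFun]

@[simp] lemma glueFun_last {V : Type*} {k m : ℕ} (c₁ : V × Fin (m + 1) → Fin k)
    (e : V → Fin k) (v : V) :
    glueFun c₁ e (v, Fin.last (m + 1)) = e v := by
  simp [glueFun]

lemma glueFun_zero {V : Type*} {k m : ℕ} (c₁ : V × Fin (m + 1) → Fin k)
    (e : V → Fin k) (v : V) :
    glueFun c₁ e (v, 0) = c₁ (v, 0) := by
  rw [← Fin.castSucc_zero, glueFun_castSucc]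

lemma glueFun_proper {V : Type*} (G : SimpleGraph V) {k m : ℕ}
    {c₁ : V × Fin (m + 1) → Fin k} {e : V → Fin k}
    (h1 : ∀ a b, (G.boxProd (pathGraph (m + 1))).Adj a b → c₁ a ≠ c₁ b)
    (he : ∀ u v, G.Adj u v → e u ≠ e v)
    (hlast : ∀ v, e v ≠ c₁ (v, Fin.last m)) :
    ∀ a b, (G.boxProd (pathGraph (m + 1 + 1))).Adj a b →
      glueFun c₁ e a ≠ glueFun c₁ e b := by
  rintro ⟨u, i⟩ ⟨v, j⟩ hadj
  rcases boxProd_adj.mp hadj with ⟨hG, hij⟩ | ⟨hpath, huv⟩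
  · simp only at hij; subst hij
    cases i using Fin.lastCases with
    | last => rw [glueFun_last, glueFun_last]; exact he u v hG
    | cast i0 =>
        rw [glueFun_castSucc, glueFun_castSucc]
        exact h1 (u, i0) (v, i0) (boxProd_adj.mpr (Or.inl ⟨hG, rfl⟩))
  · simp only at huv; subst huv
    have key : ∀ i j : Fin (m + 1 + 1), (i : ℕ) + 1 = (j : ℕ) →
        glueFun c₁ e (u, i) ≠ glueFun c₁ e (u, j) := by
      intro i j hij
      by_cases hj : j = Fin.last (m + 1)
      · subst hj
        have hi : i = (Fin.last m).castSucc := by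
          apply Fin.ext
          simp only [Fin.val_last] at hij
          simp only [Fin.coe_castSucc, Fin.val_last]
          omega
        subst hi
        rw [glueFun_castSucc, glueFun_last]
        exact (hlast u).symm
      · obtain ⟨j0, rfl⟩ := Fin.exists_castSucc_eq.mpr hj
        have hi : i ≠ Fin.last (m + 1) := by
          intro hh; subst hh
          simp only [Fin.val_last, Fin.coe_castSucc] at hij
          have := j0.isLt
          omega
        obtain ⟨i0, rfl⟩ := Fin.exists_castSucc_eq.mpr hi
        rw [glueFun_castSucc, glueFun_castSucc]
        refine h1 (u, i0) (u, j0) (boxProd_adj.mpr (Or.inr ⟨?_, rfl⟩))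
        exact pathGraph_adj.mpr (Or.inl (by simpa using hij))
    rcases pathGraph_adj.mp hpath with h | h
    · exact key i j h
    · exact (key j i h).symm

/-! ### The transfer-matrix recursion step -/

lemma card_step {V : Type*} [Fintype V] (G : SimpleGraph V) {k : ℕ}
    (cP : IndepPartition G → V → Fin k)
    (hcPker : ∀ P : IndepPartition G, Setoid.ker (cP P) = P.1)
    (m : ℕ) (P Q : IndepPartition G) :
    Nat.card (CSet G cP (m + 1) P Q) =
      ∑ R : IndepPartition G,
        Nat.card (CSet G cP m P R) * Nat.card (ExtSet G (cP R) Q) := by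
  classical
  have findep : ∀ (c : CSet G cP (m + 1) P Q),
      ∀ u v, (Setoid.ker (fun w => c.1 (w, (Fin.last m).castSucc))).r u v → ¬ G.Adj u v := by
    intro c u v huv hadj
    have h1 : c.1 (u, (Fin.last m).castSucc) = c.1 (v, (Fin.last m).castSucc) :=
      Setoid.ker_def.mp huv
    exact c.2.1 (u, (Fin.last m).castSucc) (v, (Fin.last m).castSucc)
      (boxProd_adj.mpr (Or.inl ⟨hadj, rfl⟩)) h1
  rw [card_eq_sum_fibers (β := IndepPartition G) (fun c : CSet G cP (m + 1) P Q =>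
    (⟨Setoid.ker (fun w => c.1 (w, (Fin.last m).castSucc)), findep c⟩ : IndepPartition G))]
  refine Finset.sum_congr rfl fun R _ => ?_
  refine card_eq_card_mul
    (fun x : {c : CSet G cP (m + 1) P Q //
        (⟨Setoid.ker (fun w => c.1 (w, (Fin.last m).castSucc)), findep c⟩ : IndepPartition G) = R} =>
      (⟨resFun x.1.1, resFun_proper G x.1.2.1,
        fun v => by
          show x.1.1 (v, (0 : Fin (m + 1)).castSucc) = cP P v
          rw [Fin.castSucc_zero]; exact x.1.2.2.1 v,
        congrArg Subtype.val x.2⟩ : CSet G cP m P R))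
    (Nat.card (ExtSet G (cP R) Q)) ?_
  intro c₁
  rw [← extSet_card_congr G
    (show Setoid.ker (fun v => c₁.1 (v, Fin.last m)) = Setoid.ker (cP R) by
      rw [c₁.2.2.2, hcPker]) Q]
  apply Nat.card_congr
  refine
    { toFun := fun x =>
        ⟨fun v => x.1.1.1 (v, Fin.last (m + 1)), fun v => ?_, x.1.1.2.2.2⟩
      invFun := fun e =>
        ⟨⟨⟨glueFun c₁.1 e.1,
            glueFun_proper G c₁.2.1 (proper_of_ker e.2.2) e.2.1,
            fun v => by rw [glueFun_zero]; exact c₁.2.2.1 v,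
            by simp only [glueFun_last]; exact e.2.2⟩,
          Subtype.ext (by
            show Setoid.ker (fun w => glueFun c₁.1 e.1 (w, (Fin.last m).castSucc)) = R.1
            simp only [glueFun_castSucc]
            exact c₁.2.2.2)⟩,
         Subtype.ext (funext fun p => by
            show glueFun c₁.1 e.1 (p.1, p.2.castSucc) = c₁.1 p
            rw [glueFun_castSucc])⟩
      left_inv := ?_
      right_inv := ?_ }
  · -- last layer differs from second-to-last
    have hr : x.1.1.1 (v, (Fin.last m).castSucc) = c₁.1 (v, Fin.last m) :=
      congrFun (congrArg Subtype.val x.2) (v, Fin.last m)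
    have hadj : (G.boxProd (pathGraph (m + 1 + 1))).Adj
        (v, Fin.last (m + 1)) (v, (Fin.last m).castSucc) := by
      refine boxProd_adj.mpr (Or.inr ⟨?_, rfl⟩)
      refine pathGraph_adj.mpr (Or.inr ?_)
      simp
    have h2 := x.1.1.2.1 _ _ hadj
    rwa [hr] at h2
  · rintro ⟨⟨⟨c, hc⟩, hfc⟩, hres⟩
    apply Subtype.ext
    apply Subtype.ext
    apply Subtype.ext
    funext p
    obtain ⟨v, i⟩ := p
    cases i using Fin.lastCases with
    | last => simp only [glueFun_last]
    | cast i0 =>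
        simp only [glueFun_castSucc]
        exact (congrFun (congrArg Subtype.val hres) (v, i0)).symm
  · intro e
    apply Subtype.ext
    funext v
    exact glueFun_last c₁.1 e.1 v

lemma card_zero {V : Type*} [Fintype V] (G : SimpleGraph V) {k : ℕ}
    (cP : IndepPartition G → V → Fin k)
    (hcPproper : ∀ P : IndepPartition G, ∀ u v, G.Adj u v → cP P u ≠ cP P v)
    (hcPker : ∀ P : IndepPartition G, Setoid.ker (cP P) = P.1)
    (P Q : IndepPartition G) :
    Nat.card (CSet G cP 0 P Q) = if P = Q then 1 else 0 := by
  have hlayer : ∀ c : CSet G cP 0 P Q, (fun v => c.1 (v, Fin.last 0)) = cP P := by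
    intro c; funext v
    exact c.2.2.1 v
  by_cases h : P = Q
  · subst h
    rw [if_pos rfl, Nat.card_eq_one_iff_unique]
    constructor
    · constructor
      intro a b
      apply Subtype.ext
      funext p
      obtain ⟨v, i⟩ := p
      have h0 : i = 0 := Fin.fin_one_eq_zero i
      subst h0
      rw [a.2.2.1 v, b.2.2.1 v]
    · refine ⟨⟨fun p => cP P p.1, ?_, fun v => rfl, hcPker P⟩⟩
      rintro ⟨u, i⟩ ⟨v, j⟩ hadj
      rcases boxProd_adj.mp hadj with ⟨hG, _⟩ | ⟨hpath, _⟩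
      · exact hcPproper P u v hG
      · exfalso
        have hi := i.isLt
        have hj := j.isLt
        rcases pathGraph_adj.mp hpath with hh | hh <;> omega
  · simp only [if_neg h]
    have : IsEmpty (CSet G cP 0 P Q) := by
      constructor
      intro c
      apply h
      apply Subtype.ext
      rw [← hcPker P, ← c.2.2.2, hlayer c]
    exact Nat.card_of_isEmpty


/-- The compactified transfer matrix `L` behaves like a transfer matrix:
the `(P,Q)`-entry of `Lⁿ` counts the proper `k`-colorings of `G □ P_{n+1}` whose first
layer is colored by the fixed representative `c_P` and whose last layer has kernel
partition `Q`. -/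
theorem transfer_matrix_power {V : Type*} [Fintype V] [DecidableEq V]
    (G : SimpleGraph V) (k : ℕ) (hk : Fintype.card V ≤ k)
    (cP : IndepPartition G → V → Fin k)
    (hcPproper : ∀ P : IndepPartition G, ∀ u v, G.Adj u v → cP P u ≠ cP P v)
    (hcPker : ∀ P : IndepPartition G, Setoid.ker (cP P) = P.1)
    (L : Matrix (IndepPartition G) (IndepPartition G) ℕ)
    (hL : ∀ P Q : IndepPartition G,
      L P Q = Nat.card {c : V × Fin 2 → Fin k //
        (∀ a b, (G.boxProd (pathGraph 2)).Adj a b → c a ≠ c b) ∧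
        (∀ v, c (v, 0) = cP P v) ∧
        Setoid.ker (fun v => c (v, 1)) = Q.1}) :
    ∀ n : ℕ, 1 ≤ n → ∀ P Q : IndepPartition G,
      (L ^ n) P Q = Nat.card {c : V × Fin (n + 1) → Fin k //
        (∀ a b, (G.boxProd (pathGraph (n + 1))).Adj a b → c a ≠ c b) ∧
        (∀ v, c (v, 0) = cP P v) ∧
        Setoid.ker (fun v => c (v, Fin.last n)) = Q.1} := by
  have key : ∀ n : ℕ, ∀ P Q : IndepPartition G,
      (L ^ n) P Q = Nat.card (CSet G cP n P Q) := by
    intro n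
    induction n with
    | zero =>
        intro P Q
        rw [pow_zero, card_zero G cP hcPproper hcPker P Q, Matrix.one_apply]
    | succ m ih =>
        intro P Q
        rw [pow_succ, Matrix.mul_apply, card_step G cP hcPker m P Q]
        exact Finset.sum_congr rfl fun R _ => by
          rw [ih P R, hL R Q, card_two_layer G (cP R) (hcPproper R) Q]
  exact fun n _ P Q => key n P Q
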